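/- Helly's theorem for translates: Let L be a compact convex set in ℝ^d and ℱ a finite family of convex sets in ℝ^d. If for every subfamily 𝒢 ⊆ ℱ with |𝒢| ≤ d+1 there exists a ∈ ℝ^d with a + L ⊆ ⋂𝒢, then there exists a ∈ ℝ^d with a + L ⊆ ⋂ℱ. -/

import Mathlib

open Set

/-- Helly's theorem for translates: If L is a compact convex set in ℝ^d
and ℱ a finite family of convex sets such that every subfamily of size ≤ d+1 has
intersection containing a translate of L, then ⋂ℱ contains a translate of L. -/
theorem stmt14 (d : ℕ) (L : Set (EuclideanSpace ℝ (Fin d)))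
    (hL : IsCompact L) (hLconv : Convex ℝ L)
    (F : Finset (Set (EuclideanSpace ℝ (Fin d)))) (hF : ∀ C ∈ F, Convex ℝ C)
    (h : ∀ G ⊆ F, G.card ≤ d + 1 →
      ∃ a : EuclideanSpace ℝ (Fin d),
        (fun x => a + x) '' L ⊆ ⋂₀ (G : Set (Set (EuclideanSpace ℝ (Fin d))))) :
    ∃ a : EuclideanSpace ℝ (Fin d),
      (fun x => a + x) '' L ⊆ ⋂₀ (F : Set (Set (EuclideanSpace ℝ (Fin d)))) := by
  classical
  have hrank : Module.finrank ℝ (EuclideanSpace ℝ (Fin d)) = d := by simp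
  -- the set of valid translation vectors for a set S
  let C : Set (EuclideanSpace ℝ (Fin d)) → Set (EuclideanSpace ℝ (Fin d)) := fun S => {a | ∀ x ∈ L, a + x ∈ S}
  have hCconv : ∀ S, Convex ℝ S → Convex ℝ (C S) := by
    intro S hS
    have : C S = ⋂ x ∈ L, (fun a : EuclideanSpace ℝ (Fin d) => a + x) ⁻¹' S := by
      ext a; simp [C]
    rw [this]
    refine convex_iInter fun x => convex_iInter fun _ => ?_
    have := hS.translate_preimage_right x
    rw [show (fun a : EuclideanSpace ℝ (Fin d) => a + x) = fun a => x + a from funext fun a => add_comm a x]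
    exact this
  have key : (⋂ S ∈ F, C S).Nonempty := by
    apply Convex.helly_theorem' (𝕜 := ℝ) (F := C) (s := F)
    · intro S hS; exact hCconv S (hF S hS)
    · intro G hG hGcard
      rw [hrank] at hGcard
      obtain ⟨a, ha⟩ := h G hG hGcard
      refine ⟨a, ?_⟩
      simp only [Set.mem_iInter]
      intro S hS x hx
      exact ha ⟨x, hx, rfl⟩ S hS
  obtain ⟨a, ha⟩ := key
  simp only [Set.mem_iInter] at ha
  refine ⟨a, ?_⟩
  rintro y ⟨x, hx, rfl⟩ S hS
  exact ha S hS x hx
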